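/- Let Y = (y_{ij}) be a k-reduced nonnegative m×n matrix (k ≤ m ≤ n). Then there exist real numbers λ_1,…,λ_m and μ_1,…,μ_n such that y_{ij} = max(0, λ_i + μ_j) for all i,j, and such that the entry y_{ij} participates in a k-assignment achieving min_k(Y) if and only if y_{ij} = λ_i + μ_j. -/

import Mathlib

/-- A `k`-assignment of an `m × n` matrix (indexed by naturals, rows `< m`, columns `< n`):
a set of `k` positions, no two in the same row or column. -/
def IsAssign (m n k : ℕ) (S : Finset (ℕ × ℕ)) : Prop :=
  S.card = k ∧ (∀ p ∈ S, p.1 < m ∧ p.2 < n) ∧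
    ∀ p ∈ S, ∀ q ∈ S, p ≠ q → p.1 ≠ q.1 ∧ p.2 ≠ q.2

/-- The value of a set of positions in the matrix `X`. -/
def aval (X : ℕ → ℕ → ℝ) (S : Finset (ℕ × ℕ)) : ℝ := ∑ p ∈ S, X p.1 p.2

/-- `S` is a `k`-assignment achieving the minimum value `min_k(X)`. -/
def MinAssign (m n k : ℕ) (X : ℕ → ℕ → ℝ) (S : Finset (ℕ × ℕ)) : Prop :=
  IsAssign m n k S ∧ ∀ T, IsAssign m n k T → aval X S ≤ aval X T

/-- The entry at position `(i,j)` participates in a minimum `k`-assignment of `Y`. -/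
def Participates (m n k : ℕ) (Y : ℕ → ℕ → ℝ) (i j : ℕ) : Prop :=
  ∃ S, MinAssign m n k Y S ∧ (i, j) ∈ S

/-- `Y` is a `k`-reduced nonnegative matrix: every nonzero entry participates in a
minimum `k`-assignment. -/
def KReduced (m n k : ℕ) (Y : ℕ → ℕ → ℝ) : Prop :=
  (∀ i < m, ∀ j < n, 0 ≤ Y i j) ∧
  (∀ i < m, ∀ j < n, Y i j ≠ 0 → Participates m n k Y i j)

namespace KRS

open Finset

noncomputable section
open scoped Classical

variable (m n k : ℕ) (Y : ℕ → ℕ → ℝ)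

def asgs : Finset (Finset (ℕ × ℕ)) :=
  ((range m ×ˢ range n).powerset).filter (fun S => IsAssign m n k S)

lemma subset_prod {S : Finset (ℕ × ℕ)} (hS : IsAssign m n k S) :
    S ⊆ range m ×ˢ range n := by
  intro p hp
  rcases hS.2.1 p hp with ⟨h1, h2⟩
  simp [Finset.mem_product, Finset.mem_range, h1, h2]

lemma mem_asgs {S : Finset (ℕ × ℕ)} : S ∈ asgs m n k ↔ IsAssign m n k S := by
  constructor
  · intro h; exact (Finset.mem_filter.mp h).2
  · intro h
    exact Finset.mem_filter.mpr ⟨Finset.mem_powerset.mpr (subset_prod m n k h), h⟩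

lemma isAssign_diag (hkm : k ≤ m) (hmn : m ≤ n) :
    IsAssign m n k ((range k).image (fun i => (i, i))) := by
  refine ⟨?_, ?_, ?_⟩
  · rw [Finset.card_image_of_injective _ (fun a b h => by simpa using h)]
    simp
  · intro p hp
    simp only [Finset.mem_image, Finset.mem_range] at hp
    obtain ⟨i, hi, rfl⟩ := hp
    exact ⟨lt_of_lt_of_le hi hkm, lt_of_lt_of_le hi (hkm.trans hmn)⟩
  · intro p hp q hq hpq
    simp only [Finset.mem_image, Finset.mem_range] at hp hq
    obtain ⟨i, hi, rfl⟩ := hp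
    obtain ⟨i', hi', rfl⟩ := hq
    have : i ≠ i' := by intro h; apply hpq; simp [h]
    exact ⟨this, this⟩

def avals : Finset ℝ := (asgs m n k).image (aval Y)

def M0 : ℝ := if h : (avals m n k Y).Nonempty then (avals m n k Y).min' h else 0

lemma avals_nonempty_of (S : Finset (ℕ × ℕ)) (hS : IsAssign m n k S) :
    (avals m n k Y).Nonempty :=
  ⟨aval Y S, Finset.mem_image_of_mem _ ((mem_asgs m n k).mpr hS)⟩

lemma M0_le {S : Finset (ℕ × ℕ)} (hS : IsAssign m n k S) : M0 m n k Y ≤ aval Y S := by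
  have hne := avals_nonempty_of m n k Y S hS
  rw [M0, dif_pos hne]
  exact Finset.min'_le _ _ (Finset.mem_image_of_mem _ ((mem_asgs m n k).mpr hS))

lemma minAssign_iff {S : Finset (ℕ × ℕ)} :
    MinAssign m n k Y S ↔ IsAssign m n k S ∧ aval Y S = M0 m n k Y := by
  constructor
  · rintro ⟨h1, h2⟩
    refine ⟨h1, le_antisymm ?_ (M0_le m n k Y h1)⟩
    have hne := avals_nonempty_of m n k Y S h1
    rw [M0, dif_pos hne]
    obtain ⟨w, hw, hwv⟩ := Finset.mem_image.mp (Finset.min'_mem _ hne)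
    rw [← hwv]
    exact h2 w ((mem_asgs m n k).mp hw)
  · rintro ⟨h1, h2⟩
    exact ⟨h1, fun T hT => h2 ▸ M0_le m n k Y hT⟩

/-- the "second value gap" -/
def gp : ℝ :=
  if h : ((avals m n k Y).filter (fun c => M0 m n k Y < c)).Nonempty then
    ((avals m n k Y).filter (fun c => M0 m n k Y < c)).min' h - M0 m n k Y
  else 1

lemma gp_pos : 0 < gp m n k Y := by
  rw [gp]
  split_ifs with h
  · have := Finset.min'_mem _ h
    have := (Finset.mem_filter.mp this).2
    linarith
  · norm_num

lemma aval_ge_of_not_min {S : Finset (ℕ × ℕ)} (hS : IsAssign m n k S)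
    (hne : aval Y S ≠ M0 m n k Y) : M0 m n k Y + gp m n k Y ≤ aval Y S := by
  have hlt : M0 m n k Y < aval Y S := lt_of_le_of_ne (M0_le m n k Y hS) (Ne.symm hne)
  have hmem : aval Y S ∈ (avals m n k Y).filter (fun c => M0 m n k Y < c) :=
    Finset.mem_filter.mpr ⟨Finset.mem_image_of_mem _ ((mem_asgs m n k).mpr hS), hlt⟩
  rw [gp, dif_pos ⟨_, hmem⟩]
  have := Finset.min'_le _ _ hmem
  linarith

lemma participates_iff {i j : ℕ} :
    Participates m n k Y i j ↔
      ∃ S, IsAssign m n k S ∧ aval Y S = M0 m n k Y ∧ (i, j) ∈ S := by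
  constructor
  · rintro ⟨S, hS, hmem⟩
    rcases (minAssign_iff m n k Y).mp hS with ⟨h1, h2⟩
    exact ⟨S, h1, h2, hmem⟩
  · rintro ⟨S, h1, h2, hmem⟩
    exact ⟨S, (minAssign_iff m n k Y).mpr ⟨h1, h2⟩, hmem⟩

lemma participates_lt {i j : ℕ} (h : Participates m n k Y i j) : i < m ∧ j < n := by
  obtain ⟨S, hS, hmem⟩ := h
  exact hS.1.2.1 _ hmem

end
end KRS

section margins
open Finset

lemma exists_margins (A B : Finset ℕ) :
    ∀ (t : ℕ) (ρ γ : ℕ → ℕ), (∑ a ∈ A, ρ a = t) → (∑ b ∈ B, γ b = t) →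
    ∃ z : ℕ → ℕ → ℕ, (∀ a b, z a b ≠ 0 → a ∈ A ∧ b ∈ B) ∧
      (∀ a ∈ A, ∑ b ∈ B, z a b = ρ a) ∧ (∀ b ∈ B, ∑ a ∈ A, z a b = γ b) := by
  intro t
  induction t with
  | zero =>
    intro ρ γ hρ hγ
    refine ⟨fun _ _ => 0, by simp, ?_, ?_⟩
    · intro a ha
      have := (Finset.sum_eq_zero_iff.mp hρ) a ha
      simp [this]
    · intro b hb
      have := (Finset.sum_eq_zero_iff.mp hγ) b hb
      simp [this]
  | succ t ih =>
    intro ρ γ hρ hγ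
    have ha0 : ∃ a ∈ A, 0 < ρ a := by
      by_contra h
      push_neg at h
      have : ∑ a ∈ A, ρ a = 0 := Finset.sum_eq_zero (fun a ha => Nat.le_zero.mp (h a ha))
      omega
    have hb0 : ∃ b ∈ B, 0 < γ b := by
      by_contra h
      push_neg at h
      have : ∑ b ∈ B, γ b = 0 := Finset.sum_eq_zero (fun b hb => Nat.le_zero.mp (h b hb))
      omega
    obtain ⟨a₀, ha₀A, ha₀⟩ := ha0
    obtain ⟨b₀, hb₀B, hb₀⟩ := hb0
    set ρ' := Function.update ρ a₀ (ρ a₀ - 1) with hρ'def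
    set γ' := Function.update γ b₀ (γ b₀ - 1) with hγ'def
    have hρ' : ∑ a ∈ A, ρ' a = t := by
      have h1 : ∑ a ∈ A, ρ' a = (ρ a₀ - 1) + ∑ a ∈ A.erase a₀, ρ a := by
        rw [← Finset.add_sum_erase _ _ ha₀A]
        congr 1
        · simp [hρ'def]
        · apply Finset.sum_congr rfl
          intro a ha
          simp [hρ'def, Function.update_of_ne (Finset.ne_of_mem_erase ha)]
      have h2 : ∑ a ∈ A, ρ a = ρ a₀ + ∑ a ∈ A.erase a₀, ρ a :=
        (Finset.add_sum_erase _ _ ha₀A).symm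
      omega
    have hγ' : ∑ b ∈ B, γ' b = t := by
      have h1 : ∑ b ∈ B, γ' b = (γ b₀ - 1) + ∑ b ∈ B.erase b₀, γ b := by
        rw [← Finset.add_sum_erase _ _ hb₀B]
        congr 1
        · simp [hγ'def]
        · apply Finset.sum_congr rfl
          intro b hb
          simp [hγ'def, Function.update_of_ne (Finset.ne_of_mem_erase hb)]
      have h2 : ∑ b ∈ B, γ b = γ b₀ + ∑ b ∈ B.erase b₀, γ b :=
        (Finset.add_sum_erase _ _ hb₀B).symm
      omega
    obtain ⟨z', hz'supp, hz'row, hz'col⟩ := ih ρ' γ' hρ' hγ'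
    classical
    refine ⟨fun a b => z' a b + if a = a₀ ∧ b = b₀ then 1 else 0, ?_, ?_, ?_⟩
    · intro a b h
      by_cases hab : a = a₀ ∧ b = b₀
      · exact hab.1 ▸ hab.2 ▸ ⟨ha₀A, hb₀B⟩
      · simp only [if_neg hab, add_zero] at h
        exact hz'supp a b h
    · intro a ha
      rw [Finset.sum_add_distrib, hz'row a ha]
      by_cases haa : a = a₀
      · have h1 : ∑ b ∈ B, (if a = a₀ ∧ b = b₀ then 1 else 0) = 1 := by
          have : (fun b => if a = a₀ ∧ b = b₀ then 1 else 0)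
              = fun b => if b = b₀ then (1:ℕ) else 0 := by
            funext b; by_cases h : b = b₀ <;> simp [h, haa]
          rw [this, Finset.sum_ite_eq' B b₀ (fun _ => 1), if_pos hb₀B]
        rw [h1, haa]
        simp [hρ'def]
        omega
      · have h1 : ∑ b ∈ B, (if a = a₀ ∧ b = b₀ then 1 else 0) = 0 := by
          apply Finset.sum_eq_zero; intro b hb; simp [haa]
        rw [h1]
        simp [hρ'def, Function.update_of_ne haa]
    · intro b hb
      rw [Finset.sum_add_distrib, hz'col b hb]
      by_cases hbb : b = b₀
      · have h1 : ∑ a ∈ A, (if a = a₀ ∧ b = b₀ then 1 else 0) = 1 := by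
          have : (fun a => if a = a₀ ∧ b = b₀ then 1 else 0)
              = fun a => if a = a₀ then (1:ℕ) else 0 := by
            funext a; by_cases h : a = a₀ <;> simp [h, hbb]
          rw [this, Finset.sum_ite_eq' A a₀ (fun _ => 1), if_pos ha₀A]
        rw [h1, hbb]
        simp [hγ'def]
        omega
      · have h1 : ∑ a ∈ A, (if a = a₀ ∧ b = b₀ then 1 else 0) = 0 := by
          apply Finset.sum_eq_zero; intro a ha; simp [hbb]
        rw [h1]
        simp [hγ'def, Function.update_of_ne hbb]

end margins
namespace KRS2

open Finset

noncomputable section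
open scoped Classical

lemma sum_range_split (f : ℕ → ℕ) (c d : ℕ) (hcd : c ≤ d) :
    ∑ b ∈ range d, f b = ∑ b ∈ range c, f b + ∑ b ∈ Ico c d, f b := by
  have : range c ∪ Ico c d = range d := by
    ext b; simp [Finset.mem_Ico, Finset.mem_range, Finset.mem_union]; omega
  rw [← this, Finset.sum_union]
  rw [Finset.disjoint_left]
  intro b hb hb'
  have := Finset.mem_range.mp hb
  have := (Finset.mem_Ico.mp hb').1
  omega

lemma exists_assign_step (m n k : ℕ) (hk : 0 < k) (hkm : k ≤ m) (hmn : m ≤ n)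
    (r : ℕ) (hr : 0 < r) (x : ℕ → ℕ → ℕ)
    (hsupp : ∀ a b, x a b ≠ 0 → a < m ∧ b < n)
    (hrow : ∀ a, ∑ b ∈ range n, x a b ≤ r)
    (hcol : ∀ b, ∑ a ∈ range m, x a b ≤ r)
    (htot : ∑ a ∈ range m, ∑ b ∈ range n, x a b = k * r) :
    ∃ S, IsAssign m n k S ∧ (∀ p ∈ S, 1 ≤ x p.1 p.2) ∧
      (∀ a, ∑ b ∈ range n, (x a b - if (a,b) ∈ S then 1 else 0) ≤ r - 1) ∧
      (∀ b, ∑ a ∈ range m, (x a b - if (a,b) ∈ S then 1 else 0) ≤ r - 1) := by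
  set N := m + n - k with hN
  have hmN : m ≤ N := by omega
  have hnN : n ≤ N := by omega
  have hNpos : 0 < N := by omega
  -- the column-sum version of the total
  have htot' : ∑ b ∈ range n, ∑ a ∈ range m, x a b = k * r := by
    rw [Finset.sum_comm]; exact htot
  -- z1 : filler block for real rows × dummy columns
  have hz1tot : ∑ a ∈ range m, (r - ∑ b ∈ range n, x a b) = (m - k) * r := by
    have h1 : ∑ a ∈ range m, ((r - ∑ b ∈ range n, x a b) + ∑ b ∈ range n, x a b)
        = m * r := by
      rw [Finset.sum_congr rfl (fun a _ => Nat.sub_add_cancel (hrow a))]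
      simp [mul_comm]
    rw [Finset.sum_add_distrib, htot] at h1
    have h2 := Nat.sub_mul m k r
    omega
  have hz1tot' : ∑ b ∈ Ico n N, r = (m - k) * r := by
    rw [Finset.sum_const, Nat.card_Ico, smul_eq_mul]
    congr 1
    omega
  obtain ⟨z1, hz1supp, hz1row, hz1col⟩ :=
    exists_margins (range m) (Ico n N) ((m - k) * r)
      (fun a => r - ∑ b ∈ range n, x a b) (fun _ => r) hz1tot hz1tot'
  -- z2 : filler block for dummy rows × real columns
  have hz2tot : ∑ a ∈ Ico m N, r = (n - k) * r := by
    rw [Finset.sum_const, Nat.card_Ico, smul_eq_mul]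
    congr 1
    omega
  have hz2tot' : ∑ b ∈ range n, (r - ∑ a ∈ range m, x a b) = (n - k) * r := by
    have h1 : ∑ b ∈ range n, ((r - ∑ a ∈ range m, x a b) + ∑ a ∈ range m, x a b)
        = n * r := by
      rw [Finset.sum_congr rfl (fun b _ => Nat.sub_add_cancel (hcol b))]
      simp [mul_comm]
    rw [Finset.sum_add_distrib, htot'] at h1
    have h2 := Nat.sub_mul n k r
    omega
  obtain ⟨z2, hz2supp, hz2row, hz2col⟩ :=
    exists_margins (Ico m N) (range n) ((n - k) * r)
      (fun _ => r) (fun b => r - ∑ a ∈ range m, x a b) hz2tot hz2tot'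
  -- the padded matrix
  set xh : ℕ → ℕ → ℕ := fun a b =>
    if a < m then (if b < n then x a b else z1 a b)
    else (if b < n then z2 a b else 0) with hxh
  have hatrow : ∀ a < N, ∑ b ∈ range N, xh a b = r := by
    intro a haN
    by_cases ham : a < m
    · rw [sum_range_split _ n N hnN]
      have e1 : ∑ b ∈ range n, xh a b = ∑ b ∈ range n, x a b :=
        Finset.sum_congr rfl (fun b hb => by
          simp only [hxh, if_pos ham, if_pos (mem_range.mp hb)])
      have e2 : ∑ b ∈ Ico n N, xh a b = ∑ b ∈ Ico n N, z1 a b :=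
        Finset.sum_congr rfl (fun b hb => by
          have := (mem_Ico.mp hb).1
          simp only [hxh, if_pos ham, if_neg (by omega : ¬ b < n)])
      rw [e1, e2, hz1row a (mem_range.mpr ham)]
      exact Nat.sub_add_cancel (hrow a) ▸ by
        have := hrow a; omega
    · rw [sum_range_split _ n N hnN]
      have e1 : ∑ b ∈ range n, xh a b = ∑ b ∈ range n, z2 a b :=
        Finset.sum_congr rfl (fun b hb => by
          simp only [hxh, if_neg ham, if_pos (mem_range.mp hb)])
      have e2 : ∑ b ∈ Ico n N, xh a b = 0 :=
        Finset.sum_eq_zero (fun b hb => by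
          have := (mem_Ico.mp hb).1
          simp only [hxh, if_neg ham, if_neg (by omega : ¬ b < n)])
      rw [e1, e2, hz2row a (mem_Ico.mpr ⟨by omega, haN⟩), add_zero]
  have hatcol : ∀ b < N, ∑ a ∈ range N, xh a b = r := by
    intro b hbN
    by_cases hbn : b < n
    · rw [sum_range_split _ m N hmN]
      have e1 : ∑ a ∈ range m, xh a b = ∑ a ∈ range m, x a b :=
        Finset.sum_congr rfl (fun a ha => by
          simp only [hxh, if_pos (mem_range.mp ha), if_pos hbn])
      have e2 : ∑ a ∈ Ico m N, xh a b = ∑ a ∈ Ico m N, z2 a b :=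
        Finset.sum_congr rfl (fun a ha => by
          have := (mem_Ico.mp ha).1
          simp only [hxh, if_neg (by omega : ¬ a < m), if_pos hbn])
      rw [e1, e2, hz2col b (mem_range.mpr hbn)]
      have := hcol b; omega
    · rw [sum_range_split _ m N hmN]
      have e1 : ∑ a ∈ range m, xh a b = ∑ a ∈ range m, z1 a b :=
        Finset.sum_congr rfl (fun a ha => by
          simp only [hxh, if_pos (mem_range.mp ha), if_neg hbn])
      have e2 : ∑ a ∈ Ico m N, xh a b = 0 :=
        Finset.sum_eq_zero (fun a ha => by
          have := (mem_Ico.mp ha).1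
          simp only [hxh, if_neg (by omega : ¬ a < m), if_neg hbn])
      rw [e1, e2, hz1col b (mem_Ico.mpr ⟨by omega, hbN⟩), add_zero]
  -- Hall's theorem
  set t : Fin N → Finset ℕ := fun a => (range N).filter (fun b => 1 ≤ xh a.1 b) with ht
  have hall : ∀ s : Finset (Fin N), s.card ≤ (s.biUnion t).card := by
    intro s
    have key : r * s.card ≤ r * (s.biUnion t).card := by
      have h1 : ∀ a ∈ s, ∑ b ∈ s.biUnion t, xh a.1 b = r := by
        intro a ha
        have hsub : t a ⊆ s.biUnion t := Finset.subset_biUnion_of_mem t ha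
        have : ∑ b ∈ s.biUnion t, xh a.1 b = ∑ b ∈ range N, xh a.1 b := by
          apply Finset.sum_subset_zero_on_sdiff
          · intro b hb
            obtain ⟨a', _, hb'⟩ := Finset.mem_biUnion.mp hb
            exact (Finset.mem_filter.mp hb').1
          · intro b hb
            rcases Finset.mem_sdiff.mp hb with ⟨hbr, hbn⟩
            have : ¬ (1 ≤ xh a.1 b) := fun hc =>
              hbn (hsub (Finset.mem_filter.mpr ⟨hbr, hc⟩))
            omega
          · intro b _; rfl
        rw [this, hatrow a.1 a.2]
      calc r * s.card = ∑ a ∈ s, ∑ b ∈ s.biUnion t, xh a.1 b := by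
            rw [Finset.sum_congr rfl h1, Finset.sum_const, smul_eq_mul, mul_comm]
        _ = ∑ b ∈ s.biUnion t, ∑ a ∈ s, xh a.1 b := Finset.sum_comm
        _ ≤ ∑ b ∈ s.biUnion t, r := by
            apply Finset.sum_le_sum
            intro b hb
            obtain ⟨a', _, hb'⟩ := Finset.mem_biUnion.mp hb
            have hbN : b < N := mem_range.mp (Finset.mem_filter.mp hb').1
            calc ∑ a ∈ s, xh a.1 b ≤ ∑ a : Fin N, xh a.1 b :=
                  Finset.sum_le_sum_of_subset (Finset.subset_univ s)
              _ = ∑ a ∈ range N, xh a b := by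
                  rw [← Fin.sum_univ_eq_sum_range (fun a => xh a b) N]
              _ = r := hatcol b hbN
        _ = r * (s.biUnion t).card := by rw [Finset.sum_const, smul_eq_mul, mul_comm]
    exact Nat.le_of_mul_le_mul_left key hr
  obtain ⟨f, hfinj, hft⟩ := (Finset.all_card_le_biUnion_card_iff_exists_injective t).mp hall
  have hfN : ∀ a, f a < N := fun a => mem_range.mp (Finset.mem_filter.mp (hft a)).1
  have hfx : ∀ a, 1 ≤ xh a.1 (f a) := fun a => (Finset.mem_filter.mp (hft a)).2
  -- image of f is all of range N
  have himg : Finset.univ.image f = range N := by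
    apply Finset.eq_of_subset_of_card_le
    · intro b hb
      obtain ⟨a, _, rfl⟩ := Finset.mem_image.mp hb
      exact mem_range.mpr (hfN a)
    · rw [Finset.card_range, Finset.card_image_of_injective _ hfinj, Finset.card_univ,
        Fintype.card_fin]
  -- no dummy-dummy
  have hnodd : ∀ a : Fin N, ¬ a.1 < m → f a < n := by
    intro a ham
    by_contra hfn
    have := hfx a
    simp only [hxh, if_neg ham, if_neg hfn] at this
    omega
  -- counting
  set U : Finset (Fin N) := Finset.univ.filter (fun a => f a < n) with hU
  have hUcard : U.card = n := by
    have h1 : U.image f = range n := by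
      ext b
      simp only [hU, Finset.mem_image, Finset.mem_filter, Finset.mem_univ, true_and,
        mem_range]
      constructor
      · rintro ⟨a, ha, rfl⟩; exact ha
      · intro hb
        have : b ∈ Finset.univ.image f := himg ▸ mem_range.mpr (by omega)
        obtain ⟨a, _, rfl⟩ := Finset.mem_image.mp this
        exact ⟨a, hb, rfl⟩
    rw [← Finset.card_image_of_injective U hfinj, h1, Finset.card_range]
  set W : Finset (Fin N) := Finset.univ.filter (fun a => ¬ a.1 < m) with hW
  have hWcard : W.card = N - m := by
    have h2 : W.image Fin.val = Ico m N := by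
      ext b
      simp only [hW, Finset.mem_image, Finset.mem_filter, Finset.mem_univ, true_and,
        mem_Ico]
      constructor
      · rintro ⟨a, ha, rfl⟩; exact ⟨by omega, a.2⟩
      · rintro ⟨h1, h2⟩; exact ⟨⟨b, by omega⟩, by simpa using h1, rfl⟩
    rw [← Finset.card_image_of_injective _ Fin.val_injective, h2, Nat.card_Ico]
  have hWU : W ⊆ U := by
    intro a ha
    simp only [hW, Finset.mem_filter, Finset.mem_univ, true_and] at ha
    simp only [hU, Finset.mem_filter, Finset.mem_univ, true_and]
    exact hnodd a ha
  set T : Finset (Fin N) := Finset.univ.filter (fun a => a.1 < m ∧ f a < n) with hT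
  have hTUW : T = U \ W := by
    ext a
    simp only [hT, hU, hW, Finset.mem_filter, Finset.mem_sdiff, Finset.mem_univ, true_and]
    tauto
  have hTcard : T.card = k := by
    rw [hTUW, Finset.card_sdiff_of_subset hWU, hUcard, hWcard]
    omega
  -- the assignment
  set S : Finset (ℕ × ℕ) := T.image (fun a => (a.1, f a)) with hS
  have hpinj : Function.Injective (fun a : Fin N => (a.1, f a)) := by
    intro a a' h
    simp only [Prod.mk.injEq] at h
    exact Fin.val_injective h.1
  have hmemS : ∀ p, p ∈ S ↔ ∃ a : Fin N, a.1 < m ∧ f a < n ∧ p = (a.1, f a) := by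
    intro p
    simp only [hS, Finset.mem_image, hT, Finset.mem_filter, Finset.mem_univ, true_and]
    constructor
    · rintro ⟨a, ⟨h1, h2⟩, rfl⟩; exact ⟨a, h1, h2, rfl⟩
    · rintro ⟨a, h1, h2, rfl⟩; exact ⟨a, ⟨h1, h2⟩, rfl⟩
  have hSx : ∀ p ∈ S, 1 ≤ x p.1 p.2 := by
    intro p hp
    obtain ⟨a, h1, h2, rfl⟩ := (hmemS p).mp hp
    have := hfx a
    simp only [hxh, if_pos h1, if_pos h2] at this
    exact this
  have hSassign : IsAssign m n k S := by
    refine ⟨?_, ?_, ?_⟩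
    · rw [hS, Finset.card_image_of_injective _ hpinj, hTcard]
    · intro p hp
      obtain ⟨a, h1, h2, rfl⟩ := (hmemS p).mp hp
      exact ⟨h1, h2⟩
    · intro p hp q hq hpq
      obtain ⟨a, h1, h2, rfl⟩ := (hmemS p).mp hp
      obtain ⟨a', h1', h2', rfl⟩ := (hmemS q).mp hq
      have haa : a ≠ a' := fun h => hpq (by rw [h])
      exact ⟨fun h => haa (Fin.val_injective h), fun h => haa (hfinj h)⟩
  refine ⟨S, hSassign, hSx, ?_, ?_⟩
  · -- row decrements
    intro a
    by_cases ham : a < m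
    · set af : Fin N := ⟨a, lt_of_lt_of_le ham hmN⟩ with haf
      have hrowchar : ∀ b, ((a, b) ∈ S ↔ (f af < n ∧ b = f af)) := by
        intro b
        rw [hmemS]
        constructor
        · rintro ⟨a', h1, h2, heq⟩
          have e1 : a = a'.1 := congrArg Prod.fst heq
          have e2 : b = f a' := congrArg Prod.snd heq
          have : a' = af := Fin.val_injective (show a'.1 = af.1 from e1.symm)
          subst this
          exact ⟨h2, e2⟩
        · rintro ⟨h1, rfl⟩
          exact ⟨af, ham, h1, rfl⟩
      by_cases hfa : f af < n
      · have hpt : ∀ b ∈ range n,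
            (x a b - if (a,b) ∈ S then 1 else 0) + (if (a,b) ∈ S then 1 else 0) = x a b := by
          intro b _
          by_cases hb : (a, b) ∈ S
          · have := hSx _ hb
            simp only [if_pos hb]
            simp at this ⊢
            omega
          · simp [hb]
        have h1 : ∑ b ∈ range n, ((x a b - if (a,b) ∈ S then 1 else 0)
            + (if (a,b) ∈ S then 1 else 0)) = ∑ b ∈ range n, x a b :=
          Finset.sum_congr rfl hpt
        rw [Finset.sum_add_distrib] at h1
        have h2 : ∑ b ∈ range n, (if (a,b) ∈ S then 1 else 0) = 1 := by
          have : (fun b => if (a,b) ∈ S then (1:ℕ) else 0)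
              = fun b => if b = f af then 1 else 0 := by
            funext b
            by_cases hb : b = f af
            · simp [hb, hrowchar, hfa]
            · simp [hrowchar, hb]
          rw [this, Finset.sum_ite_eq' (range n) (f af) (fun _ => 1),
            if_pos (mem_range.mpr hfa)]
        have := hrow a
        omega
      · have h2 : ∀ b, ((a,b) ∈ S) = False := by
          intro b
          simp only [eq_iff_iff, iff_false]
          intro hb
          exact hfa ((hrowchar b).mp hb).1
        have h1 : ∑ b ∈ range n, (x a b - if (a,b) ∈ S then 1 else 0)
            = ∑ b ∈ range n, x a b := by
          apply Finset.sum_congr rfl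
          intro b _
          simp [h2 b]
        rw [h1]
        -- row a has a filler entry
        have hz1pos : 1 ≤ z1 a (f af) := by
          have := hfx af
          simp only [hxh, haf, if_pos ham] at this
          rw [← haf, if_neg hfa] at this
          exact this
        have hz1sum : ∑ b ∈ Ico n N, z1 a b = r - ∑ b ∈ range n, x a b :=
          hz1row a (mem_range.mpr ham)
        have hmem : f af ∈ Ico n N := mem_Ico.mpr ⟨by omega, hfN af⟩
        have hle : 1 ≤ ∑ b ∈ Ico n N, z1 a b :=
          le_trans hz1pos (Finset.single_le_sum (f := fun b => z1 a b)
            (fun b _ => Nat.zero_le _) hmem)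
        have := hrow a
        omega
    · -- a ≥ m : everything vanishes
      have h1 : ∑ b ∈ range n, (x a b - if (a,b) ∈ S then 1 else 0) = 0 := by
        apply Finset.sum_eq_zero
        intro b _
        have hx0 : x a b = 0 := by
          by_contra h
          exact ham (hsupp a b h).1
        simp [hx0]
      omega
  · -- column decrements
    intro b
    by_cases hbn : b < n
    · obtain ⟨af, hfaf⟩ : ∃ a : Fin N, f a = b := by
        have : b ∈ Finset.univ.image f := himg ▸ mem_range.mpr (by omega)
        obtain ⟨a, _, ha⟩ := Finset.mem_image.mp this
        exact ⟨a, ha⟩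
      have hcolchar : ∀ a, ((a, b) ∈ S ↔ (af.1 < m ∧ a = af.1)) := by
        intro a
        rw [hmemS]
        constructor
        · rintro ⟨a', h1, h2, heq⟩
          have e1 : a = a'.1 := congrArg Prod.fst heq
          have e2 : b = f a' := congrArg Prod.snd heq
          have : a' = af := hfinj (e2.symm.trans hfaf.symm)
          subst this
          exact ⟨h1, e1⟩
        · rintro ⟨h1, rfl⟩
          exact ⟨af, h1, by omega, by rw [hfaf]⟩
      by_cases hafm : af.1 < m
      · have hpt : ∀ a ∈ range m,
            (x a b - if (a,b) ∈ S then 1 else 0) + (if (a,b) ∈ S then 1 else 0) = x a b := by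
          intro a _
          by_cases hb : (a, b) ∈ S
          · have := hSx _ hb
            simp only [if_pos hb]
            simp at this ⊢
            omega
          · simp [hb]
        have h1 : ∑ a ∈ range m, ((x a b - if (a,b) ∈ S then 1 else 0)
            + (if (a,b) ∈ S then 1 else 0)) = ∑ a ∈ range m, x a b :=
          Finset.sum_congr rfl hpt
        rw [Finset.sum_add_distrib] at h1
        have h2 : ∑ a ∈ range m, (if (a,b) ∈ S then 1 else 0) = 1 := by
          have : (fun a => if (a,b) ∈ S then (1:ℕ) else 0)
              = fun a => if a = af.1 then 1 else 0 := by
            funext a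
            by_cases ha : a = af.1
            · simp [ha, hcolchar, hafm]
            · simp [hcolchar, ha]
          rw [this, Finset.sum_ite_eq' (range m) (af.1) (fun _ => 1),
            if_pos (mem_range.mpr hafm)]
        have := hcol b
        omega
      · have h2 : ∀ a, ((a,b) ∈ S) = False := by
          intro a
          simp only [eq_iff_iff, iff_false]
          intro ha
          exact hafm ((hcolchar a).mp ha).1
        have h1 : ∑ a ∈ range m, (x a b - if (a,b) ∈ S then 1 else 0)
            = ∑ a ∈ range m, x a b := by
          apply Finset.sum_congr rfl
          intro a _
          simp [h2 a]
        rw [h1]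
        have hz2pos : 1 ≤ z2 af.1 b := by
          have := hfx af
          rw [hfaf] at this
          simp only [hxh, if_neg hafm, if_pos hbn] at this
          exact this
        have hz2sum : ∑ a ∈ Ico m N, z2 a b = r - ∑ a ∈ range m, x a b :=
          hz2col b (mem_range.mpr hbn)
        have hmem : af.1 ∈ Ico m N := mem_Ico.mpr ⟨by omega, af.2⟩
        have hle : 1 ≤ ∑ a ∈ Ico m N, z2 a b :=
          le_trans hz2pos (Finset.single_le_sum (f := fun a => z2 a b)
            (fun a _ => Nat.zero_le _) hmem)
        have := hcol b
        omega
    · have h1 : ∑ a ∈ range m, (x a b - if (a,b) ∈ S then 1 else 0) = 0 := by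
        apply Finset.sum_eq_zero
        intro a _
        have hx0 : x a b = 0 := by
          by_contra h
          exact hbn (hsupp a b h).2
        have hbS : (a, b) ∉ S := by
          intro hb
          exact hbn (hSassign.2.1 _ hb).2
        simp [hx0, hbS]
      omega

end
end KRS2
namespace KRS

open Finset

noncomputable section
open scoped Classical

variable (m n k : ℕ) (Y : ℕ → ℕ → ℝ)

def costsum (x : ℕ → ℕ → ℕ) : ℝ :=
  ∑ a ∈ range m, ∑ b ∈ range n, (x a b : ℝ) * Y a b

lemma sum_ind_card {S : Finset (ℕ × ℕ)} (hS : S ⊆ range m ×ˢ range n) :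
    ∑ a ∈ range m, ∑ b ∈ range n, (if (a, b) ∈ S then (1:ℕ) else 0) = S.card := by
  rw [← Finset.sum_product']
  rw [Finset.sum_ite_mem]
  rw [Finset.inter_eq_right.mpr hS]
  simp

lemma sum_ind_aval {S : Finset (ℕ × ℕ)} (hS : S ⊆ range m ×ˢ range n) :
    ∑ a ∈ range m, ∑ b ∈ range n, (if (a, b) ∈ S then (1:ℝ) else 0) * Y a b
      = aval Y S := by
  rw [← Finset.sum_product']
  have : ∀ p ∈ range m ×ˢ range n,
      (if p ∈ S then (1:ℝ) else 0) * Y p.1 p.2 = if p ∈ S then Y p.1 p.2 else 0 := by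
    intro p _
    by_cases h : p ∈ S <;> simp [h]
  rw [Finset.sum_congr rfl this, Finset.sum_ite_mem, Finset.inter_eq_right.mpr hS, aval]

lemma costsum_ge (hk : 0 < k) (hkm : k ≤ m) (hmn : m ≤ n) :
    ∀ (r : ℕ) (x : ℕ → ℕ → ℕ),
      (∀ a b, x a b ≠ 0 → a < m ∧ b < n) →
      (∀ a, ∑ b ∈ range n, x a b ≤ r) →
      (∀ b, ∑ a ∈ range m, x a b ≤ r) →
      (∑ a ∈ range m, ∑ b ∈ range n, x a b = k * r) →
      (r : ℝ) * M0 m n k Y ≤ costsum m n Y x := by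
  intro r
  induction r with
  | zero =>
    intro x hsupp hrow hcol htot
    have hx0 : ∀ a ∈ range m, ∀ b ∈ range n, (x a b : ℝ) * Y a b = 0 := by
      intro a ha b hb
      have h1 := hrow a
      have h2 : x a b ≤ ∑ b ∈ range n, x a b :=
        Finset.single_le_sum (f := fun b => x a b) (fun _ _ => Nat.zero_le _) hb
      have : x a b = 0 := by omega
      simp [this]
    rw [costsum]
    rw [Finset.sum_congr rfl (fun a ha => Finset.sum_congr rfl (fun b hb => hx0 a ha b hb))]
    simp
  | succ r ih =>
    intro x hsupp hrow hcol htot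
    obtain ⟨S, hSassign, hSx, hrow', hcol'⟩ :=
      KRS2.exists_assign_step m n k hk hkm hmn (r+1) (Nat.succ_pos r) x hsupp hrow hcol htot
    set x' : ℕ → ℕ → ℕ := fun a b => x a b - if (a,b) ∈ S then 1 else 0 with hx'
    have hite_le : ∀ a b, (if (a,b) ∈ S then (1:ℕ) else 0) ≤ x a b := by
      intro a b
      by_cases h : (a,b) ∈ S
      · simpa [h] using hSx _ h
      · simp [h]
    have hsub : S ⊆ range m ×ˢ range n := subset_prod m n k hSassign
    have htot' : ∑ a ∈ range m, ∑ b ∈ range n, x' a b = k * r := by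
      have h1 : ∀ a ∈ range m, ∀ b ∈ range n,
          x' a b + (if (a,b) ∈ S then 1 else 0) = x a b := by
        intro a _ b _
        have := hite_le a b
        simp only [hx']
        omega
      have h2 : ∑ a ∈ range m, ∑ b ∈ range n,
          (x' a b + if (a,b) ∈ S then 1 else 0) = k * (r+1) := by
        rw [Finset.sum_congr rfl (fun a ha => Finset.sum_congr rfl (fun b hb => h1 a ha b hb))]
        exact htot
      have h3 : ∑ a ∈ range m, ∑ b ∈ range n, (x' a b + if (a,b) ∈ S then 1 else 0)
          = (∑ a ∈ range m, ∑ b ∈ range n, x' a b)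
            + ∑ a ∈ range m, ∑ b ∈ range n, (if (a,b) ∈ S then 1 else 0) := by
        rw [← Finset.sum_add_distrib]
        exact Finset.sum_congr rfl (fun a _ => Finset.sum_add_distrib)
      rw [h3, sum_ind_card m n hsub, hSassign.1] at h2
      have : k * (r + 1) = k * r + k := by ring
      omega
    have hsupp' : ∀ a b, x' a b ≠ 0 → a < m ∧ b < n := by
      intro a b h
      apply hsupp
      simp only [hx'] at h
      omega
    have hcost : costsum m n Y x = costsum m n Y x' + aval Y S := by
      rw [costsum, costsum, ← sum_ind_aval m n Y hsub, ← Finset.sum_add_distrib]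
      apply Finset.sum_congr rfl
      intro a _
      rw [← Finset.sum_add_distrib]
      apply Finset.sum_congr rfl
      intro b _
      have h1 := hite_le a b
      have h2 : (x a b : ℝ) = (x' a b : ℝ) + (if (a,b) ∈ S then (1:ℝ) else 0) := by
        by_cases h : (a,b) ∈ S
        · simp only [hx', if_pos h] at *
          have : 1 ≤ x a b := by omega
          push_cast [Nat.cast_sub this]
          ring
        · simp [hx', h]
      rw [h2, add_mul]
    have ihx := ih x' hsupp' hrow' hcol' htot'
    have hM0 : M0 m n k Y ≤ aval Y S := M0_le m n k Y hSassign
    rw [hcost]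
    push_cast
    linarith

lemma costsum_ge_strict (hk : 0 < k) (hkm : k ≤ m) (hmn : m ≤ n) :
    ∀ (r : ℕ) (x : ℕ → ℕ → ℕ) (a₀ b₀ : ℕ),
      (∀ a b, x a b ≠ 0 → a < m ∧ b < n) →
      (∀ a, ∑ b ∈ range n, x a b ≤ r) →
      (∀ b, ∑ a ∈ range m, x a b ≤ r) →
      (∑ a ∈ range m, ∑ b ∈ range n, x a b = k * r) →
      a₀ < m → b₀ < n → 1 ≤ x a₀ b₀ → ¬ Participates m n k Y a₀ b₀ →
      (r : ℝ) * M0 m n k Y + gp m n k Y ≤ costsum m n Y x := by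
  intro r
  induction r with
  | zero =>
    intro x a₀ b₀ hsupp hrow hcol htot ha₀ hb₀ hx₀ hnp
    exfalso
    have h1 := hrow a₀
    have h2 : x a₀ b₀ ≤ ∑ b ∈ range n, x a₀ b :=
      Finset.single_le_sum (f := fun b => x a₀ b) (fun _ _ => Nat.zero_le _)
        (mem_range.mpr hb₀)
    omega
  | succ r ih =>
    intro x a₀ b₀ hsupp hrow hcol htot ha₀ hb₀ hx₀ hnp
    obtain ⟨S, hSassign, hSx, hrow', hcol'⟩ :=
      KRS2.exists_assign_step m n k hk hkm hmn (r+1) (Nat.succ_pos r) x hsupp hrow hcol htot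
    set x' : ℕ → ℕ → ℕ := fun a b => x a b - if (a,b) ∈ S then 1 else 0 with hx'
    have hite_le : ∀ a b, (if (a,b) ∈ S then (1:ℕ) else 0) ≤ x a b := by
      intro a b
      by_cases h : (a,b) ∈ S
      · simpa [h] using hSx _ h
      · simp [h]
    have hsub : S ⊆ range m ×ˢ range n := subset_prod m n k hSassign
    have htot' : ∑ a ∈ range m, ∑ b ∈ range n, x' a b = k * r := by
      have h1 : ∀ a ∈ range m, ∀ b ∈ range n,
          x' a b + (if (a,b) ∈ S then 1 else 0) = x a b := by
        intro a _ b _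
        have := hite_le a b
        simp only [hx']
        omega
      have h2 : ∑ a ∈ range m, ∑ b ∈ range n,
          (x' a b + if (a,b) ∈ S then 1 else 0) = k * (r+1) := by
        rw [Finset.sum_congr rfl (fun a ha => Finset.sum_congr rfl (fun b hb => h1 a ha b hb))]
        exact htot
      have h3 : ∑ a ∈ range m, ∑ b ∈ range n, (x' a b + if (a,b) ∈ S then 1 else 0)
          = (∑ a ∈ range m, ∑ b ∈ range n, x' a b)
            + ∑ a ∈ range m, ∑ b ∈ range n, (if (a,b) ∈ S then 1 else 0) := by
        rw [← Finset.sum_add_distrib]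
        exact Finset.sum_congr rfl (fun a _ => Finset.sum_add_distrib)
      rw [h3, sum_ind_card m n hsub, hSassign.1] at h2
      have : k * (r + 1) = k * r + k := by ring
      omega
    have hsupp' : ∀ a b, x' a b ≠ 0 → a < m ∧ b < n := by
      intro a b h
      apply hsupp
      simp only [hx'] at h
      omega
    have hcost : costsum m n Y x = costsum m n Y x' + aval Y S := by
      rw [costsum, costsum, ← sum_ind_aval m n Y hsub, ← Finset.sum_add_distrib]
      apply Finset.sum_congr rfl
      intro a _
      rw [← Finset.sum_add_distrib]
      apply Finset.sum_congr rfl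
      intro b _
      have h1 := hite_le a b
      have h2 : (x a b : ℝ) = (x' a b : ℝ) + (if (a,b) ∈ S then (1:ℝ) else 0) := by
        by_cases h : (a,b) ∈ S
        · simp only [hx', if_pos h] at *
          have : 1 ≤ x a b := by omega
          push_cast [Nat.cast_sub this]
          ring
        · simp [hx', h]
      rw [h2, add_mul]
    by_cases hmem : (a₀, b₀) ∈ S
    · -- S is not optimal
      have hne : aval Y S ≠ M0 m n k Y := by
        intro h
        exact hnp ⟨S, (minAssign_iff m n k Y).mpr ⟨hSassign, h⟩, hmem⟩
      have h1 := aval_ge_of_not_min m n k Y hSassign hne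
      have h2 := costsum_ge m n k Y hk hkm hmn r x' hsupp' hrow' hcol' htot'
      rw [hcost]
      push_cast
      linarith
    · have hx₀' : 1 ≤ x' a₀ b₀ := by
        simp only [hx', if_neg hmem]
        omega
      have h1 := ih x' a₀ b₀ hsupp' hrow' hcol' htot' ha₀ hb₀ hx₀' hnp
      have h2 : M0 m n k Y ≤ aval Y S := M0_le m n k Y hSassign
      rw [hcost]
      push_cast
      linarith

end
end KRS
namespace KRS

open Finset

noncomputable section
open scoped Classical

variable (m n k : ℕ) (Y : ℕ → ℕ → ℝ)

lemma sum_comm3 {α β γ M : Type*} [AddCommMonoid M] (s : Finset α) (t : Finset β)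
    (v : Finset γ) (f : α → β → γ → M) :
    ∑ a ∈ s, ∑ b ∈ t, ∑ u ∈ v, f a b u = ∑ u ∈ v, ∑ a ∈ s, ∑ b ∈ t, f a b u := by
  have h : ∀ a ∈ s, ∑ b ∈ t, ∑ u ∈ v, f a b u = ∑ u ∈ v, ∑ b ∈ t, f a b u :=
    fun a _ => Finset.sum_comm
  rw [Finset.sum_congr rfl h, Finset.sum_comm]

lemma row_count {T : Finset (ℕ × ℕ)} (hT : T ⊆ range m ×ˢ range n) (a : ℕ) :
    ∑ b ∈ range n, (if (a,b) ∈ T then (1:ℕ) else 0) = ∑ p ∈ T, (if p.1 = a then 1 else 0) := by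
  have h1 : ∀ b ∈ range n, (if (a,b) ∈ T then (1:ℕ) else 0)
      = ∑ p ∈ T, (if (a,b) = p then 1 else 0) := by
    intro b _
    rw [Finset.sum_ite_eq T (a,b) (fun _ => 1)]
  rw [Finset.sum_congr rfl h1, Finset.sum_comm]
  apply Finset.sum_congr rfl
  intro p hp
  have hpn : p.2 ∈ range n := (Finset.mem_product.mp (hT hp)).2
  have h2 : ∀ b, (if (a,b) = p then (1:ℕ) else 0)
      = if p.1 = a then (if b = p.2 then 1 else 0) else 0 := by
    intro b
    by_cases h3 : p.1 = a
    · by_cases h4 : b = p.2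
      · have he : (a, b) = p := Prod.ext_iff.mpr ⟨h3.symm, h4⟩
        rw [if_pos he, if_pos h3, if_pos h4]
      · have he : (a, b) ≠ p := fun h => h4 (congrArg Prod.snd h)
        rw [if_neg he, if_pos h3, if_neg h4]
    · have he : (a, b) ≠ p := fun h => h3 ((congrArg Prod.fst h).symm)
      rw [if_neg he, if_neg h3]
  rw [Finset.sum_congr rfl (fun b _ => h2 b)]
  by_cases h3 : p.1 = a
  · simp only [if_pos h3]
    rw [Finset.sum_ite_eq' (range n) p.2 (fun _ => 1), if_pos hpn]
  · simp [h3]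

lemma col_count {T : Finset (ℕ × ℕ)} (hT : T ⊆ range m ×ˢ range n) (b : ℕ) :
    ∑ a ∈ range m, (if (a,b) ∈ T then (1:ℕ) else 0) = ∑ p ∈ T, (if p.2 = b then 1 else 0) := by
  have h1 : ∀ a ∈ range m, (if (a,b) ∈ T then (1:ℕ) else 0)
      = ∑ p ∈ T, (if (a,b) = p then 1 else 0) := by
    intro a _
    rw [Finset.sum_ite_eq T (a,b) (fun _ => 1)]
  rw [Finset.sum_congr rfl h1, Finset.sum_comm]
  apply Finset.sum_congr rfl
  intro p hp
  have hpm : p.1 ∈ range m := (Finset.mem_product.mp (hT hp)).1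
  have h2 : ∀ a, (if (a,b) = p then (1:ℕ) else 0)
      = if p.2 = b then (if a = p.1 then 1 else 0) else 0 := by
    intro a
    by_cases h3 : p.2 = b
    · by_cases h4 : a = p.1
      · have he : (a, b) = p := Prod.ext_iff.mpr ⟨h4, h3.symm⟩
        rw [if_pos he, if_pos h3, if_pos h4]
      · have he : (a, b) ≠ p := fun h => h4 ((congrArg Prod.fst h))
        rw [if_neg he, if_pos h3, if_neg h4]
    · have he : (a, b) ≠ p := fun h => h3 ((congrArg Prod.snd h).symm)
      rw [if_neg he, if_neg h3]
  rw [Finset.sum_congr rfl (fun a _ => h2 a)]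
  by_cases h3 : p.2 = b
  · simp only [if_pos h3]
    rw [Finset.sum_ite_eq' (range m) p.1 (fun _ => 1), if_pos hpm]
  · simp [h3]

lemma rowS_le_one {S : Finset (ℕ × ℕ)} (hS : IsAssign m n k S) (a : ℕ) :
    ∑ p ∈ S, (if p.1 = a then (1:ℕ) else 0) ≤ 1 := by
  rw [← Finset.sum_filter]
  rw [Finset.sum_const, smul_eq_mul, mul_one]
  apply Finset.card_le_one.mpr
  intro p hp q hq
  rcases Finset.mem_filter.mp hp with ⟨hpS, hpa⟩
  rcases Finset.mem_filter.mp hq with ⟨hqS, hqa⟩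
  by_contra hne
  exact (hS.2.2 p hpS q hqS hne).1 (hpa.trans hqa.symm)

lemma colS_le_one {S : Finset (ℕ × ℕ)} (hS : IsAssign m n k S) (b : ℕ) :
    ∑ p ∈ S, (if p.2 = b then (1:ℕ) else 0) ≤ 1 := by
  rw [← Finset.sum_filter]
  rw [Finset.sum_const, smul_eq_mul, mul_one]
  apply Finset.card_le_one.mpr
  intro p hp q hq
  rcases Finset.mem_filter.mp hp with ⟨hpS, hpa⟩
  rcases Finset.mem_filter.mp hq with ⟨hqS, hqa⟩
  by_contra hne
  exact (hS.2.2 p hpS q hqS hne).2 (hpa.trans hqa.symm)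

/-- The key cyclic exchange inequality ("Claim C"). -/
lemma claimC (hk : 0 < k) (hkm : k ≤ m) (hmn : m ≤ n)
    (r : ℕ) [NeZero r] (i j : Fin r → ℕ)
    (hij : ∀ u, i u < m ∧ j u < n)
    (hP : ∀ u, Participates m n k Y (i u) (j (u + 1))) :
    0 ≤ ∑ u : Fin r, (Y (i u) (j u) - Y (i u) (j (u + 1))) ∧
      ((∃ u, ¬ Participates m n k Y (i u) (j u)) →
        gp m n k Y ≤ ∑ u : Fin r, (Y (i u) (j u) - Y (i u) (j (u + 1)))) := by
  have hSex : ∀ u, ∃ S, IsAssign m n k S ∧ aval Y S = M0 m n k Y ∧ (i u, j (u+1)) ∈ S :=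
    fun u => (participates_iff m n k Y).mp (hP u)
  choose S hS1 hS2 hS3 using hSex
  set T : Fin r → Finset (ℕ × ℕ) :=
    fun u => insert (i u, j u) ((S u).erase (i u, j (u+1))) with hTdef
  -- the fundamental exchange identity
  have key : ∀ (M : Type) (_ : AddCommMonoid M) (F : ℕ × ℕ → M) (u : Fin r),
      ∑ p ∈ T u, F p + F (i u, j (u+1)) = ∑ p ∈ S u, F p + F (i u, j u) := by
    intro M _ F u
    by_cases hfS : (i u, j u) ∈ S u
    · have hfb : (i u, j u) = (i u, j (u+1)) := by
        by_contra hne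
        exact (((hS1 u).2.2 _ hfS _ (hS3 u) hne).1) rfl
      have : T u = S u := by
        rw [hTdef]
        simp only
        rw [hfb, Finset.insert_erase (hS3 u)]
      rw [this, hfb]
    · have hfe : (i u, j u) ∉ (S u).erase (i u, j (u+1)) := fun h =>
        hfS (Finset.mem_of_mem_erase h)
      rw [hTdef]
      simp only
      rw [Finset.sum_insert hfe]
      have h1 : ∑ p ∈ (S u).erase (i u, j (u+1)), F p + F (i u, j (u+1)) = ∑ p ∈ S u, F p :=
        Finset.sum_erase_add _ _ (hS3 u)
      calc F (i u, j u) + ∑ p ∈ (S u).erase (i u, j (u+1)), F p + F (i u, j (u+1))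
          = F (i u, j u) + (∑ p ∈ (S u).erase (i u, j (u+1)), F p + F (i u, j (u+1))) := by
            rw [add_assoc]
        _ = F (i u, j u) + ∑ p ∈ S u, F p := by rw [h1]
        _ = ∑ p ∈ S u, F p + F (i u, j u) := add_comm _ _
  have hTsub : ∀ u, T u ⊆ range m ×ˢ range n := by
    intro u p hp
    rw [hTdef] at hp
    simp only [Finset.mem_insert] at hp
    rcases hp with rfl | hp
    · exact Finset.mem_product.mpr ⟨mem_range.mpr (hij u).1, mem_range.mpr (hij u).2⟩
    · exact subset_prod m n k (hS1 u) (Finset.mem_of_mem_erase hp)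
  have hTcard : ∀ u, (T u).card = k := by
    intro u
    have := key ℕ inferInstance (fun _ => 1) u
    simp only [Finset.sum_const, smul_eq_mul, mul_one] at this
    have hc := (hS1 u).1
    omega
  have hTaval : ∀ u, aval Y (T u)
      = M0 m n k Y + Y (i u) (j u) - Y (i u) (j (u+1)) := by
    intro u
    have := key ℝ inferInstance (fun p => Y p.1 p.2) u
    rw [show ∑ p ∈ S u, Y p.1 p.2 = M0 m n k Y from hS2 u] at this
    rw [aval]
    linarith [this]
  set x : ℕ → ℕ → ℕ := fun a b => ∑ u : Fin r, (if (a,b) ∈ T u then 1 else 0) with hxdef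
  have hsupp : ∀ a b, x a b ≠ 0 → a < m ∧ b < n := by
    intro a b h
    rw [hxdef] at h
    simp only at h
    have : ∃ u, (if (a,b) ∈ T u then (1:ℕ) else 0) ≠ 0 := by
      by_contra hc
      push_neg at hc
      exact h (Finset.sum_eq_zero (fun u _ => hc u))
    obtain ⟨u, hu⟩ := this
    have : (a,b) ∈ T u := by
      by_contra hc
      simp [hc] at hu
    have := Finset.mem_product.mp (hTsub u this)
    exact ⟨mem_range.mp this.1, mem_range.mp this.2⟩
  have hrow : ∀ a, ∑ b ∈ range n, x a b ≤ r := by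
    intro a
    rw [hxdef]
    simp only
    rw [Finset.sum_comm]
    calc ∑ u : Fin r, ∑ b ∈ range n, (if (a,b) ∈ T u then (1:ℕ) else 0)
        = ∑ u : Fin r, ∑ p ∈ T u, (if p.1 = a then 1 else 0) := by
          exact Finset.sum_congr rfl (fun u _ => row_count m n (hTsub u) a)
      _ = ∑ u : Fin r, ∑ p ∈ S u, (if p.1 = a then 1 else 0) := by
          apply Finset.sum_congr rfl
          intro u _
          have := key ℕ inferInstance (fun p => if p.1 = a then 1 else 0) u
          simp only at this
          omega
      _ ≤ ∑ u : Fin r, 1 :=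
          Finset.sum_le_sum (fun u _ => rowS_le_one m n k (hS1 u) a)
      _ = r := by simp
  have hcol : ∀ b, ∑ a ∈ range m, x a b ≤ r := by
    intro b
    rw [hxdef]
    simp only
    rw [Finset.sum_comm]
    have hshift : ∑ u : Fin r, (if j (u+1) = b then (1:ℕ) else 0)
        = ∑ u : Fin r, (if j u = b then 1 else 0) :=
      Fintype.sum_equiv (Equiv.addRight (1 : Fin r)) _ _ (fun u => rfl)
    have h1 : ∀ u : Fin r, ∑ p ∈ T u, (if p.2 = b then (1:ℕ) else 0)
        + (if j (u+1) = b then 1 else 0)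
        = ∑ p ∈ S u, (if p.2 = b then 1 else 0) + (if j u = b then 1 else 0) :=
      fun u => key ℕ inferInstance (fun p => if p.2 = b then 1 else 0) u
    have h2 : ∑ u : Fin r, ∑ p ∈ T u, (if p.2 = b then (1:ℕ) else 0)
        = ∑ u : Fin r, ∑ p ∈ S u, (if p.2 = b then 1 else 0) := by
      have := Finset.sum_congr rfl (fun u (_ : u ∈ Finset.univ) => h1 u)
      rw [Finset.sum_add_distrib, Finset.sum_add_distrib, hshift] at this
      omega
    calc ∑ u : Fin r, ∑ a ∈ range m, (if (a,b) ∈ T u then (1:ℕ) else 0)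
        = ∑ u : Fin r, ∑ p ∈ T u, (if p.2 = b then 1 else 0) :=
          Finset.sum_congr rfl (fun u _ => col_count m n (hTsub u) b)
      _ = ∑ u : Fin r, ∑ p ∈ S u, (if p.2 = b then 1 else 0) := h2
      _ ≤ ∑ u : Fin r, 1 :=
          Finset.sum_le_sum (fun u _ => colS_le_one m n k (hS1 u) b)
      _ = r := by simp
  have htot : ∑ a ∈ range m, ∑ b ∈ range n, x a b = k * r := by
    rw [hxdef]
    simp only
    rw [sum_comm3]
    rw [Finset.sum_congr rfl (fun u (_ : u ∈ Finset.univ) =>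
      (sum_ind_card m n (hTsub u)).trans (hTcard u))]
    simp [mul_comm]
  have hcostsum : costsum m n Y x
      = (r : ℝ) * M0 m n k Y + ∑ u : Fin r, (Y (i u) (j u) - Y (i u) (j (u+1))) := by
    rw [costsum]
    have h1 : ∀ a ∈ range m, ∀ b ∈ range n, (x a b : ℝ) * Y a b
        = ∑ u : Fin r, (if (a,b) ∈ T u then (1:ℝ) else 0) * Y a b := by
      intro a _ b _
      rw [hxdef]
      push_cast
      rw [Finset.sum_mul]
    rw [Finset.sum_congr rfl (fun a ha => Finset.sum_congr rfl (fun b hb => h1 a ha b hb))]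
    rw [sum_comm3]
    rw [Finset.sum_congr rfl (fun u (_ : u ∈ Finset.univ) =>
      (sum_ind_aval m n Y (hTsub u)).trans (hTaval u))]
    have h3 : ∀ u : Fin r, M0 m n k Y + Y (i u) (j u) - Y (i u) (j (u+1))
        = M0 m n k Y + (Y (i u) (j u) - Y (i u) (j (u+1))) := fun u => by ring
    rw [Finset.sum_congr rfl (fun u (_ : u ∈ Finset.univ) => h3 u), Finset.sum_add_distrib,
      Finset.sum_const, Finset.card_univ, Fintype.card_fin, nsmul_eq_mul]
  constructor
  · have := costsum_ge m n k Y hk hkm hmn r x hsupp hrow hcol htot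
    rw [hcostsum] at this
    linarith
  · rintro ⟨u₀, hu₀⟩
    have hx1 : 1 ≤ x (i u₀) (j u₀) := by
      rw [hxdef]
      simp only
      have hm : (i u₀, j u₀) ∈ T u₀ := Finset.mem_insert_self _ _
      calc (1:ℕ) = (if (i u₀, j u₀) ∈ T u₀ then 1 else 0) := by rw [if_pos hm]
        _ ≤ ∑ u : Fin r, (if (i u₀, j u₀) ∈ T u then 1 else 0) :=
            Finset.single_le_sum (f := fun u => if (i u₀, j u₀) ∈ T u then (1:ℕ) else 0)
              (fun _ _ => Nat.zero_le _) (Finset.mem_univ u₀)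
    have := costsum_ge_strict m n k Y hk hkm hmn r x (i u₀) (j u₀) hsupp hrow hcol htot
      (hij u₀).1 (hij u₀).2 hx1 hu₀
    rw [hcostsum] at this
    linarith

end
end KRS
namespace KRS

open Finset

noncomputable section
open scoped Classical

variable (m n k : ℕ) (Y : ℕ → ℕ → ℝ)

def eps : ℝ := gp m n k Y / (m + 1)

lemma eps_pos : 0 < eps m n k Y :=
  div_pos (gp_pos m n k Y) (by positivity)

/-- perturbed matrix -/
def Xp (i j : ℕ) : ℝ :=
  Y i j - if Participates m n k Y i j then 0 else eps m n k Y

lemma Xp_le (i j : ℕ) : Xp m n k Y i j ≤ Y i j := by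
  rw [Xp]
  split_ifs with h
  · simp
  · have := eps_pos m n k Y
    linarith

lemma Xp_of_part {i j : ℕ} (h : Participates m n k Y i j) : Xp m n k Y i j = Y i j := by
  rw [Xp, if_pos h]
  ring

lemma Xp_of_not_part {i j : ℕ} (h : ¬ Participates m n k Y i j) :
    Xp m n k Y i j = Y i j - eps m n k Y := by
  rw [Xp, if_neg h]

/-- adjacency along a walk: `p` comes later, `q` earlier; the backward edge
`(p.1, q.2)` must participate. -/
def adj (p q : ℕ × ℕ) : Prop := Participates m n k Y p.1 q.2

/-- weight of a walk (stored in reverse order: head = last edge of the walk) -/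
def wgt : List (ℕ × ℕ) → ℝ
  | [] => 0
  | [p] => Xp m n k Y p.1 p.2
  | p :: q :: L => Xp m n k Y p.1 p.2 - Y p.1 q.2 + wgt (q :: L)

lemma wgt_cons_cons (p q : ℕ × ℕ) (L : List (ℕ × ℕ)) :
    wgt m n k Y (p :: q :: L) = Xp m n k Y p.1 p.2 - Y p.1 q.2 + wgt m n k Y (q :: L) := rfl

lemma wgt_cons (p : ℕ × ℕ) (V : List (ℕ × ℕ)) (hV : V ≠ []) :
    wgt m n k Y (p :: V) = Xp m n k Y p.1 p.2 - Y p.1 (V.head hV).2 + wgt m n k Y V := by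
  cases V with
  | nil => exact absurd rfl hV
  | cons v V' => rfl

lemma wgt_append : ∀ (U V : List (ℕ × ℕ)) (hU : U ≠ []) (hV : V ≠ []),
    wgt m n k Y (U ++ V)
      = wgt m n k Y U + wgt m n k Y V - Y (U.getLast hU).1 (V.head hV).2 := by
  intro U
  induction U with
  | nil => intro V hU hV; exact absurd rfl hU
  | cons p U' ih =>
    intro V hU hV
    cases U' with
    | nil =>
      simp only [List.singleton_append]
      rw [wgt_cons m n k Y p V hV]
      simp [wgt]
      ring
    | cons q U'' =>
      have h1 : (p :: q :: U'') ++ V = p :: ((q :: U'') ++ V) := rfl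
      have hne : (q :: U'') ++ V ≠ [] := by simp
      rw [h1, wgt_cons m n k Y p _ hne, ih V (by simp) hV, wgt_cons_cons]
      have h2 : ((q :: U'') ++ V).head hne = q := rfl
      have h3 : (p :: q :: U'').getLast hU = (q :: U'').getLast (by simp) := by
        rw [List.getLast_cons]
      rw [h2, h3]
      ring

lemma sum_range_le (L : List (ℕ × ℕ)) (hrange : ∀ p ∈ L, p.1 < m ∧ p.2 < n)
    (hnodup : (L.map Prod.fst).Nodup) : L.length ≤ m := by
  have h1 : (L.map Prod.fst).toFinset ⊆ range m := by
    intro a ha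
    rw [List.mem_toFinset] at ha
    obtain ⟨p, hp, rfl⟩ := List.mem_map.mp ha
    exact mem_range.mpr (hrange p hp).1
  have h2 := Finset.card_le_card h1
  rw [List.toFinset_card_of_nodup hnodup, Finset.card_range, List.length_map] at h2
  exact h2

lemma wgt_eq : ∀ (L : List (ℕ × ℕ)),
    wgt m n k Y L = (L.map (fun p => Xp m n k Y p.1 p.2)).sum
      - ((L.zip L.tail).map (fun pq => Y pq.1.1 pq.2.2)).sum := by
  intro L
  induction L with
  | nil => simp [wgt]
  | cons p M ih =>
    cases M with
    | nil => simp [wgt]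
    | cons q M' =>
      rw [wgt_cons_cons, ih]
      have h1 : (p :: q :: M').zip (p :: q :: M').tail
          = (p, q) :: ((q :: M').zip (q :: M').tail) := rfl
      rw [h1]
      simp only [List.map_cons, List.sum_cons]
      ring

end
end KRS
namespace KRS

open Finset

noncomputable section
open scoped Classical

variable (m n k : ℕ) (Y : ℕ → ℕ → ℝ)

lemma list_sum_eq_range {β M : Type*} [AddCommMonoid M] (l : List β) (f : β → M) (d : β) :
    (l.map f).sum = ∑ t ∈ range l.length, f (l.getD t d) := by
  rw [← Fin.sum_univ_fun_getElem l f, ← Fin.sum_univ_eq_sum_range (fun t => f (l.getD t d)) l.length]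
  apply Finset.sum_congr rfl
  intro u _
  rw [List.getD_eq_getElem l d u.2]

lemma claimC_nat (hk : 0 < k) (hkm : k ≤ m) (hmn : m ≤ n)
    (r : ℕ) (hr : 0 < r) (i j : ℕ → ℕ)
    (hij : ∀ u, u < r → i u < m ∧ j u < n)
    (hP : ∀ u, u < r → Participates m n k Y (i u) (j ((u + 1) % r))) :
    (0 ≤ ∑ u ∈ range r, (Y (i u) (j u) - Y (i u) (j ((u + 1) % r)))) ∧
      ((∃ u, u < r ∧ ¬ Participates m n k Y (i u) (j u)) →
        gp m n k Y ≤ ∑ u ∈ range r, (Y (i u) (j u) - Y (i u) (j ((u + 1) % r)))) := by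
  haveI : NeZero r := ⟨hr.ne'⟩
  have hval : ∀ u : Fin r, ((u + 1 : Fin r)).1 = (u.1 + 1) % r := by
    intro u
    rw [Fin.val_add, Fin.val_one' r]
    conv_rhs => rw [Nat.add_mod]
    rw [Nat.mod_eq_of_lt u.2]
  obtain ⟨h1, h2⟩ := claimC m n k Y hk hkm hmn r (fun u => i u.1) (fun u => j u.1)
    (fun u => hij u.1 u.2)
    (fun u => by have := hP u.1 u.2; rwa [← hval u] at this)
  have hsum : ∑ u : Fin r, (Y (i u.1) (j u.1) - Y (i u.1) (j ((u + 1 : Fin r).1)))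
      = ∑ u ∈ range r, (Y (i u) (j u) - Y (i u) (j ((u + 1) % r))) := by
    rw [← Fin.sum_univ_eq_sum_range (fun u => Y (i u) (j u) - Y (i u) (j ((u + 1) % r))) r]
    exact Finset.sum_congr rfl (fun u _ => by rw [hval u])
  constructor
  · rw [← hsum]; exact h1
  · rintro ⟨u, hu, hnp⟩
    rw [← hsum]
    exact h2 ⟨⟨u, hu⟩, hnp⟩

lemma claimC_list (hk : 0 < k) (hkm : k ≤ m) (hmn : m ≤ n)
    (L : List (ℕ × ℕ)) (hne : L ≠ [])
    (hchain : L.Chain' (adj m n k Y))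
    (hrange : ∀ p ∈ L, p.1 < m ∧ p.2 < n)
    (hnodup : (L.map Prod.fst).Nodup)
    (hwrap : Participates m n k Y (L.getLast hne).1 (L.head hne).2) :
    Y (L.getLast hne).1 (L.head hne).2 ≤ wgt m n k Y L := by
  have hr : 0 < L.length := List.length_pos_iff.mpr hne
  set r := L.length with hrdef
  set i : ℕ → ℕ := fun t => (L.getD t (0,0)).1 with hidef
  set j : ℕ → ℕ := fun t => (L.getD t (0,0)).2 with hjdef
  have hget : ∀ t (h : t < r), L.getD t (0,0) = L[t] := by
    intro t h
    exact List.getD_eq_getElem L (0,0) h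
  have hmem : ∀ t (h : t < r), L[t] ∈ L := fun t h => List.getElem_mem h
  have hij : ∀ u, u < r → i u < m ∧ j u < n := by
    intro u hu
    rw [hidef, hjdef]
    simp only
    rw [hget u hu]
    exact hrange _ (hmem u hu)
  have hlastidx : (L.getLast hne) = L[r - 1]'(by omega) := List.getLast_eq_getElem hne
  have hheadidx : (L.head hne) = L[0]'hr := by
    cases L with
    | nil => exact absurd rfl hne
    | cons a L' => rfl
  have hP : ∀ u, u < r → Participates m n k Y (i u) (j ((u + 1) % r)) := by
    intro u hu
    by_cases h : u + 1 < r
    · have hc := List.isChain_iff_getElem.mp hchain u (by omega)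
      have e1 : (u + 1) % r = u + 1 := Nat.mod_eq_of_lt h
      rw [e1, hidef, hjdef]
      simp only
      rw [hget u hu, hget (u+1) h]
      exact hc
    · have hu1 : u = r - 1 := by omega
      have e1 : (u + 1) % r = 0 := by
        rw [hu1, Nat.sub_add_cancel (by omega : 1 ≤ r), Nat.mod_self]
      rw [e1, hu1, hidef, hjdef]
      simp only
      rw [hget (r-1) (by omega), hget 0 hr]
      rw [hlastidx, hheadidx] at hwrap
      exact hwrap
  obtain ⟨hge, hstrict⟩ := claimC_nat m n k Y hk hkm hmn r hr i j hij hP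
  have hrm : r ≤ m := sum_range_le m n L hrange hnodup
  -- weight identities
  have hXpsum : ∑ u ∈ range r, Xp m n k Y (i u) (j u)
      = (L.map (fun p => Xp m n k Y p.1 p.2)).sum := by
    rw [list_sum_eq_range L (fun p => Xp m n k Y p.1 p.2) (0,0)]
  have hzlen : (L.zip L.tail).length = r - 1 := by
    rw [List.length_zip, List.length_tail]
    omega
  have hzget : ∀ t (h : t < r - 1),
      (L.zip L.tail)[t]'(by omega) = (L[t]'(by omega), L[t+1]'(by omega)) := by
    intro t h
    have e2 : (L.zip L.tail)[t]'(by omega)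
        = (L[t]'(by omega), L.tail[t]'(by rw [List.length_tail]; omega)) :=
      List.getElem_zip
    rw [e2]
    congr 1
    exact List.getElem_tail _
  have hBsum : ∑ u ∈ range r, Y (i u) (j ((u + 1) % r))
      = ((L.zip L.tail).map (fun pq => Y pq.1.1 pq.2.2)).sum + Y (i (r-1)) (j 0) := by
    have hr1 : r = (r - 1) + 1 := by omega
    rw [hr1, Finset.sum_range_succ]
    congr 1
    · rw [list_sum_eq_range (L.zip L.tail) (fun pq => Y pq.1.1 pq.2.2) ((0,0),(0,0)), hzlen]
      apply Finset.sum_congr rfl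
      intro t ht
      have ht' : t < r - 1 := mem_range.mp ht
      rw [List.getD_eq_getElem _ _ (by rw [hzlen]; omega : t < (L.zip L.tail).length)]
      rw [hzget t ht']
      have e1 : (t + 1) % ((r-1)+1) = t + 1 := Nat.mod_eq_of_lt (by omega)
      rw [e1, hidef, hjdef]
      simp only
      rw [hget t (by omega), hget (t+1) (by omega)]
    · have e1 : ((r - 1) + 1) % ((r-1)+1) = 0 := Nat.mod_self _
      rw [e1]
      simp
  have hwgtid : wgt m n k Y L - Y (L.getLast hne).1 (L.head hne).2
      = ∑ u ∈ range r, Xp m n k Y (i u) (j u) - ∑ u ∈ range r, Y (i u) (j ((u + 1) % r)) := by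
    rw [wgt_eq, hXpsum, hBsum]
    have e1 : Y (i (r-1)) (j 0) = Y (L.getLast hne).1 (L.head hne).2 := by
      rw [hidef, hjdef]
      simp only
      rw [hget (r-1) (by omega), hget 0 hr, hlastidx, hheadidx]
    rw [e1]
    ring
  -- perturbation accounting
  set c := ((range r).filter (fun u => ¬ Participates m n k Y (i u) (j u))).card with hcdef
  have hXpY : ∑ u ∈ range r, Xp m n k Y (i u) (j u)
      = ∑ u ∈ range r, Y (i u) (j u) - c * eps m n k Y := by
    have h1 : ∀ u ∈ range r, Xp m n k Y (i u) (j u)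
        = Y (i u) (j u) - (if Participates m n k Y (i u) (j u) then 0 else eps m n k Y) :=
      fun u _ => rfl
    rw [Finset.sum_congr rfl h1, Finset.sum_sub_distrib]
    congr 1
    rw [Finset.sum_ite, Finset.sum_const, Finset.sum_const]
    simp [hcdef, mul_comm]
  have hsplit : ∑ u ∈ range r, (Y (i u) (j u) - Y (i u) (j ((u + 1) % r)))
      = ∑ u ∈ range r, Y (i u) (j u) - ∑ u ∈ range r, Y (i u) (j ((u + 1) % r)) :=
    Finset.sum_sub_distrib _ _
  by_cases hc0 : c = 0
  · rw [hsplit] at hge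
    have : (c : ℝ) * eps m n k Y = 0 := by rw [hc0]; simp
    linarith [hwgtid, hXpY]
  · have hbad : ∃ u, u < r ∧ ¬ Participates m n k Y (i u) (j u) := by
      have : ((range r).filter (fun u => ¬ Participates m n k Y (i u) (j u))).Nonempty := by
        rw [← Finset.card_pos]
        omega
      obtain ⟨u, hu⟩ := this
      rcases Finset.mem_filter.mp hu with ⟨h1, h2⟩
      exact ⟨u, mem_range.mp h1, h2⟩
    have h1 := hstrict hbad
    rw [hsplit] at h1
    have hcr : c ≤ r := le_trans (Finset.card_filter_le _ _) (by simp)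
    have hcm : (c : ℝ) ≤ m := by
      have : c ≤ m := le_trans hcr hrm
      exact_mod_cast this
    have h2 : (c : ℝ) * eps m n k Y ≤ (m : ℝ) * eps m n k Y :=
      mul_le_mul_of_nonneg_right hcm (le_of_lt (eps_pos m n k Y))
    have h3 : (m : ℝ) * eps m n k Y < gp m n k Y := by
      rw [eps]
      have hm1 : (0:ℝ) < (m : ℝ) + 1 := by positivity
      rw [mul_div_assoc']
      rw [div_lt_iff₀ hm1]
      nlinarith [gp_pos m n k Y]
    linarith [hwgtid, hXpY]

end
end KRS
namespace KRS

open Finset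

noncomputable section
open scoped Classical

variable (m n k : ℕ) (Y : ℕ → ℕ → ℝ)

lemma mem_map_first {α β : Type*} (f : α → β) :
    ∀ (L : List α) (y : β), y ∈ L.map f →
      ∃ B p C, L = B ++ p :: C ∧ f p = y ∧ y ∉ B.map f := by
  intro L
  induction L with
  | nil => simp
  | cons x L ih =>
    intro y hy
    by_cases hxy : f x = y
    · exact ⟨[], x, L, rfl, hxy, by simp⟩
    · have h1 : y ∈ L.map f := by
        rw [List.map_cons] at hy
        rcases List.mem_cons.mp hy with h | h
        · exact absurd h.symm hxy
        · exact h
      obtain ⟨B, p, C, rfl, h2, h3⟩ := ih y h1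
      refine ⟨x :: B, p, C, rfl, h2, ?_⟩
      simp only [List.map_cons, List.mem_cons]
      rintro (h | h)
      · exact hxy h.symm
      · exact h3 h

lemma dup_decomp {α β : Type*} (f : α → β) :
    ∀ (L : List α), ¬ (L.map f).Nodup →
      ∃ A q B p C, L = A ++ q :: B ++ p :: C ∧ f q = f p ∧ ((q :: B).map f).Nodup := by
  intro L
  induction L with
  | nil => intro h; simp at h
  | cons x L ih =>
    intro h
    by_cases hL : (L.map f).Nodup
    · have hx : f x ∈ L.map f := by
        by_contra hc
        exact h (by simp [List.nodup_cons, hc, hL])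
      obtain ⟨B, p, C, rfl, h1, h2⟩ := mem_map_first f L (f x) hx
      refine ⟨[], x, B, p, C, by simp, h1.symm, ?_⟩
      simp only [List.map_cons, List.nodup_cons]
      constructor
      · exact h2
      · rw [List.map_append] at hL
        exact (List.nodup_append.mp hL).1
    · obtain ⟨A, q, B, p, C, rfl, h1, h2⟩ := ih hL
      exact ⟨x :: A, q, B, p, C, rfl, h1, h2⟩

lemma cut (hk : 0 < k) (hkm : k ≤ m) (hmn : m ≤ n)
    (L : List (ℕ × ℕ)) (hchain : L.Chain' (adj m n k Y))
    (hrange : ∀ p ∈ L, p.1 < m ∧ p.2 < n)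
    (hnod : ¬ (L.map Prod.fst).Nodup) :
    ∃ L', L'.length < L.length ∧ L'.Chain' (adj m n k Y) ∧
      (∀ p ∈ L', p.1 < m ∧ p.2 < n) ∧ L' ≠ [] ∧ L'.head? = L.head? ∧
      wgt m n k Y L' ≤ wgt m n k Y L := by
  obtain ⟨A, q, B, p, C, rfl, hqp, hnodQB⟩ := dup_decomp Prod.fst L hnod
  set U : List (ℕ × ℕ) := A ++ [q] with hUdef
  set M : List (ℕ × ℕ) := B ++ [p] with hMdef
  have hUne : U ≠ [] := by simp [hUdef]
  have hMne : M ≠ [] := by simp [hMdef]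
  have hLe : A ++ q :: B ++ p :: C = U ++ (M ++ C) := by
    simp [hUdef, hMdef]
  have hUlast : U.getLast hUne = q := by
    have h2 := List.getLast?_eq_getLast hUne
    have h3 : some (U.getLast hUne) = some q :=
      h2.symm.trans (List.getLast?_concat (l := A) (a := q))
    exact Option.some_injective _ h3
  have hMlast : M.getLast hMne = p := by
    have h2 := List.getLast?_eq_getLast hMne
    have h3 : some (M.getLast hMne) = some p :=
      h2.symm.trans (List.getLast?_concat (l := B) (a := p))
    exact Option.some_injective _ h3
  -- decompose the chain
  rw [hLe] at hchain hrange
  have hc1 := (List.isChain_append.mp hchain)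
  obtain ⟨hcU, hcMC, hjunc1⟩ := hc1
  obtain ⟨hcM, hcC, hjunc2⟩ := List.isChain_append.mp hcMC
  -- the wrap adjacency for the cycle M
  have hwrap : Participates m n k Y (M.getLast hMne).1 (M.head hMne).2 := by
    have h1 : adj m n k Y q (M.head hMne) := by
      apply hjunc1 q
      · rw [List.getLast?_eq_getLast hUne, hUlast]
        rfl
      · rw [List.head?_append_of_ne_nil _ hMne]
        rw [List.head?_eq_head hMne]
        simp
    rw [hMlast]
    have : q.1 = p.1 := hqp
    rw [adj] at h1
    rw [← this]
    exact h1
  have hrangeM : ∀ x ∈ M, x.1 < m ∧ x.2 < n := by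
    intro x hx
    apply hrange
    exact List.mem_append.mpr (Or.inr (List.mem_append.mpr (Or.inl hx)))
  have hnodM : (M.map Prod.fst).Nodup := by
    rw [hMdef, List.map_append]
    simp only [List.map_cons, List.map_nil]
    have h1 : ((q :: B).map Prod.fst).Nodup := hnodQB
    simp only [List.map_cons, List.nodup_cons] at h1
    apply List.Nodup.append h1.2 (by simp)
    intro a ha hb
    simp only [List.mem_singleton] at hb
    subst hb
    rw [← hqp] at ha
    exact h1.1 ha
  have hcycle : Y (M.getLast hMne).1 (M.head hMne).2 ≤ wgt m n k Y M :=
    claimC_list m n k Y hk hkm hmn M hMne hcM hrangeM hnodM hwrap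
  set L' : List (ℕ × ℕ) := U ++ C with hL'def
  have hL'ne : L' ≠ [] := by simp [hL'def, hUdef]
  -- chain for L'
  have hcL' : L'.Chain' (adj m n k Y) := by
    apply List.isChain_append.mpr
    refine ⟨hcU, hcC, ?_⟩
    intro x hx y hy
    rw [List.getLast?_eq_getLast hUne, hUlast] at hx
    simp only [Option.mem_def, Option.some_inj] at hx
    subst hx
    have h2 : adj m n k Y p y := by
      apply hjunc2 p
      · rw [List.getLast?_eq_getLast hMne, hMlast]
        rfl
      · exact hy
    rw [adj] at h2 ⊢
    rw [hqp]
    exact h2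
  refine ⟨L', ?_, hcL', ?_, hL'ne, ?_, ?_⟩
  · rw [hL'def, hLe]
    simp [hMdef]
    omega
  · intro x hx
    apply hrange
    rw [hL'def] at hx
    rcases List.mem_append.mp hx with h | h
    · exact List.mem_append.mpr (Or.inl h)
    · exact List.mem_append.mpr (Or.inr (List.mem_append.mpr (Or.inr h)))
  · rw [hL'def, hLe]
    rw [List.head?_append_of_ne_nil _ hUne, List.head?_append_of_ne_nil _ hUne]
  · -- weight comparison
    by_cases hC : C = []
    · subst hC
      rw [hLe]
      have h2 : wgt m n k Y (U ++ (M ++ [])) = wgt m n k Y U + wgt m n k Y M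
          - Y (U.getLast hUne).1 (M.head hMne).2 := by
        rw [List.append_nil]
        exact wgt_append m n k Y U M hUne hMne
      have h3 : wgt m n k Y L' = wgt m n k Y U := by
        rw [hL'def, List.append_nil]
      rw [h3, h2, hUlast]
      have h5 : q.1 = p.1 := hqp
      rw [h5, ← hMlast]
      linarith [hcycle]
    · have hCne : C ≠ [] := hC
      have hMCne : M ++ C ≠ [] := by simp [hMne]
      rw [hLe]
      have h1 : wgt m n k Y (U ++ (M ++ C)) = wgt m n k Y U + wgt m n k Y (M ++ C)
          - Y (U.getLast hUne).1 ((M ++ C).head hMCne).2 :=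
        wgt_append m n k Y U (M ++ C) hUne hMCne
      have h2 : wgt m n k Y (M ++ C) = wgt m n k Y M + wgt m n k Y C
          - Y (M.getLast hMne).1 (C.head hCne).2 :=
        wgt_append m n k Y M C hMne hCne
      have h3 : wgt m n k Y L' = wgt m n k Y U + wgt m n k Y C
          - Y (U.getLast hUne).1 (C.head hCne).2 :=
        wgt_append m n k Y U C hUne hCne
      have h4 : (M ++ C).head hMCne = M.head hMne := by
        have e1 : (M ++ C).head? = M.head? := List.head?_append_of_ne_nil _ hMne
        rw [List.head?_eq_head hMCne, List.head?_eq_head hMne] at e1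
        exact Option.some_injective _ e1
      rw [h3, h1, h2, h4, hUlast]
      have h5 : q.1 = p.1 := hqp
      rw [h5, ← hMlast]
      linarith [hcycle]

end
end KRS
section finlists

lemma finite_lists {α : Type*} (s : Set α) (hs : s.Finite) :
    ∀ N : ℕ, {l : List α | l.length ≤ N ∧ ∀ x ∈ l, x ∈ s}.Finite := by
  intro N
  induction N with
  | zero =>
    apply Set.Finite.subset (Set.finite_singleton ([] : List α))
    rintro l ⟨h1, _⟩
    simp only [Set.mem_singleton_iff]
    exact List.length_eq_zero_iff.mp (Nat.le_zero.mp h1)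
  | succ N ih =>
    apply Set.Finite.subset (Set.Finite.insert ([] : List α) (Set.Finite.image2 List.cons hs ih))
    rintro l ⟨h1, h2⟩
    cases l with
    | nil => simp
    | cons x t =>
      apply Set.mem_insert_of_mem
      apply Set.mem_image2_of_mem
      · exact h2 x (by simp)
      · refine ⟨by simpa using h1, fun y hy => h2 y (by simp [hy])⟩

end finlists

namespace KRS

open Finset

noncomputable section
open scoped Classical

variable (m n k : ℕ) (Y : ℕ → ℕ → ℝ)

def WalkSet : Set (List (ℕ × ℕ)) :=
  {L | L ≠ [] ∧ L.Chain' (adj m n k Y) ∧ (∀ p ∈ L, p.1 < m ∧ p.2 < n) ∧ L.length ≤ m}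

lemma walkSet_finite : (WalkSet m n k Y).Finite := by
  apply Set.Finite.subset
    (finite_lists {p : ℕ × ℕ | p.1 < m ∧ p.2 < n}
      (Set.Finite.subset ((range m ×ˢ range n).finite_toSet) (by
        rintro ⟨a, b⟩ ⟨h1, h2⟩
        simp [Finset.mem_product, h1, h2])) m)
  rintro L ⟨h1, h2, h3, h4⟩
  exact ⟨h4, fun x hx => h3 x hx⟩

def colCand (j : ℕ) : Finset (List (ℕ × ℕ)) :=
  (walkSet_finite m n k Y).toFinset.filter (fun L => (L.head!).2 = j)

lemma mem_colCand {j : ℕ} {L : List (ℕ × ℕ)} :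
    L ∈ colCand m n k Y j ↔ L ∈ WalkSet m n k Y ∧ (L.head!).2 = j := by
  rw [colCand, Finset.mem_filter, Set.Finite.mem_toFinset]

lemma single_mem_colCand (hk : 0 < k) (hkm : k ≤ m) {i j : ℕ} (hi : i < m) (hj : j < n) :
    [(i, j)] ∈ colCand m n k Y j := by
  rw [mem_colCand]
  refine ⟨⟨by simp, List.isChain_singleton _, ?_, by simp; omega⟩, rfl⟩
  intro p hp
  simp only [List.mem_singleton] at hp
  subst hp
  exact ⟨hi, hj⟩

def muF (j : ℕ) : ℝ :=
  if h : (colCand m n k Y j).Nonempty then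
    ((colCand m n k Y j).image (wgt m n k Y)).min' (h.image _) else 0

lemma muF_le {j : ℕ} {L : List (ℕ × ℕ)} (hL : L ∈ colCand m n k Y j) :
    muF m n k Y j ≤ wgt m n k Y L := by
  rw [muF, dif_pos ⟨L, hL⟩]
  exact Finset.min'_le _ _ (Finset.mem_image_of_mem _ hL)

lemma muF_attained {j : ℕ} (h : (colCand m n k Y j).Nonempty) :
    ∃ L ∈ colCand m n k Y j, muF m n k Y j = wgt m n k Y L := by
  rw [muF, dif_pos h]
  obtain ⟨L, hL, hw⟩ := Finset.mem_image.mp (Finset.min'_mem _ (h.image (wgt m n k Y)))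
  exact ⟨L, hL, hw.symm⟩

def rowCand (i : ℕ) : Finset (List (ℕ × ℕ)) :=
  (walkSet_finite m n k Y).toFinset.filter
    (fun L => Participates m n k Y i ((L.head!).2))

lemma mem_rowCand {i : ℕ} {L : List (ℕ × ℕ)} :
    L ∈ rowCand m n k Y i ↔ L ∈ WalkSet m n k Y ∧ Participates m n k Y i ((L.head!).2) := by
  rw [rowCand, Finset.mem_filter, Set.Finite.mem_toFinset]

def dR (i : ℕ) : ℝ :=
  (insert (0:ℝ) ((rowCand m n k Y i).image
    (fun L => wgt m n k Y L - Y i ((L.head!).2)))).min' (Finset.insert_nonempty _ _)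

lemma dR_le_zero (i : ℕ) : dR m n k Y i ≤ 0 :=
  Finset.min'_le _ _ (Finset.mem_insert_self _ _)

lemma dR_le {i : ℕ} {L : List (ℕ × ℕ)} (hL : L ∈ rowCand m n k Y i) :
    dR m n k Y i ≤ wgt m n k Y L - Y i ((L.head!).2) :=
  Finset.min'_le _ _ (Finset.mem_insert_of_mem (Finset.mem_image_of_mem _ hL))

lemma dR_cases (i : ℕ) : dR m n k Y i = 0 ∨
    ∃ L ∈ rowCand m n k Y i, dR m n k Y i = wgt m n k Y L - Y i ((L.head!).2) := by
  have := Finset.min'_mem (insert (0:ℝ) ((rowCand m n k Y i).image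
    (fun L => wgt m n k Y L - Y i ((L.head!).2)))) (Finset.insert_nonempty _ _)
  rcases Finset.mem_insert.mp this with h | h
  · exact Or.inl h
  · obtain ⟨L, hL, hw⟩ := Finset.mem_image.mp h
    exact Or.inr ⟨L, hL, hw.symm⟩

/-- K3 : μ is below the weight of every walk -/
lemma mu_le_walk (hk : 0 < k) (hkm : k ≤ m) (hmn : m ≤ n) :
    ∀ (N : ℕ) (L : List (ℕ × ℕ)), L.length ≤ N → L ≠ [] →
      L.Chain' (adj m n k Y) → (∀ p ∈ L, p.1 < m ∧ p.2 < n) →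
      muF m n k Y ((L.head!).2) ≤ wgt m n k Y L := by
  intro N
  induction N with
  | zero =>
    intro L hlen hne _ _
    exact absurd (List.length_eq_zero_iff.mp (Nat.le_zero.mp hlen)) hne
  | succ N ih =>
    intro L hlen hne hchain hrange
    by_cases hm : L.length ≤ m
    · exact muF_le m n k Y ((mem_colCand m n k Y).mpr ⟨⟨hne, hchain, hrange, hm⟩, rfl⟩)
    · have hnod : ¬ (L.map Prod.fst).Nodup := fun hnod =>
        hm (sum_range_le m n L hrange hnod)
      obtain ⟨L', h1, h2, h3, h4, h5, h6⟩ := cut m n k Y hk hkm hmn L hchain hrange hnod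
      have hhead : L'.head! = L.head! := by
        rw [List.head!_eq_head?, List.head!_eq_head?, h5]
      calc muF m n k Y ((L.head!).2) = muF m n k Y ((L'.head!).2) := by rw [hhead]
        _ ≤ wgt m n k Y L' := ih L' (by omega) h4 h2 h3
        _ ≤ wgt m n k Y L := h6

/-- K4 : relaxation along a forward edge -/
lemma mu_le_dR (hk : 0 < k) (hkm : k ≤ m) (hmn : m ≤ n) {i j : ℕ} (hi : i < m) (hj : j < n) :
    muF m n k Y j ≤ dR m n k Y i + Xp m n k Y i j := by
  rcases dR_cases m n k Y i with h | ⟨L, hL, hdr⟩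
  · have h1 := muF_le m n k Y (single_mem_colCand m n k Y hk hkm hi hj)
    have h2 : wgt m n k Y [(i, j)] = Xp m n k Y i j := rfl
    rw [h]
    linarith [h1, h2.le, h2.ge]
  · obtain ⟨hLW, hLP⟩ := (mem_rowCand m n k Y).mp hL
    obtain ⟨hLne, hLchain, hLrange, hLlen⟩ := hLW
    obtain ⟨h0, t0, rfl⟩ := List.exists_cons_of_ne_nil hLne
    have hhd : ((h0 :: t0).head!) = h0 := rfl
    have hchain2 : ((i, j) :: h0 :: t0).Chain' (adj m n k Y) := by
      rw [List.Chain', List.isChain_cons_cons]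
      constructor
      · rw [adj]
        rw [hhd] at hLP
        exact hLP
      · exact hLchain
    have hrange2 : ∀ p ∈ (i, j) :: h0 :: t0, p.1 < m ∧ p.2 < n := by
      intro p hp
      rcases List.mem_cons.mp hp with rfl | hp
      · exact ⟨hi, hj⟩
      · exact hLrange p hp
    have hw : wgt m n k Y ((i, j) :: h0 :: t0)
        = Xp m n k Y i j - Y i h0.2 + wgt m n k Y (h0 :: t0) := rfl
    have h1 := mu_le_walk m n k Y hk hkm hmn ((i, j) :: h0 :: t0).length _ le_rfl
      (by simp) hchain2 hrange2
    have hhd2 : (((i, j) :: h0 :: t0).head!).2 = j := rfl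
    rw [hhd2] at h1
    rw [hhd] at hdr
    rw [hw] at h1
    linarith [h1, hdr]

/-- K5 : relaxation along a backward edge -/
lemma dR_le_mu (hk : 0 < k) (hkm : k ≤ m) (hmn : m ≤ n) {i j : ℕ}
    (hP : Participates m n k Y i j) :
    dR m n k Y i ≤ muF m n k Y j - Y i j := by
  obtain ⟨hi, hj⟩ := participates_lt m n k Y hP
  have hne : (colCand m n k Y j).Nonempty :=
    ⟨_, single_mem_colCand m n k Y hk hkm hi hj⟩
  obtain ⟨L, hL, hmu⟩ := muF_attained m n k Y hne
  obtain ⟨hLW, hLhd⟩ := (mem_colCand m n k Y).mp hL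
  have hLrow : L ∈ rowCand m n k Y i := by
    rw [mem_rowCand]
    exact ⟨hLW, by rw [hLhd]; exact hP⟩
  have := dR_le m n k Y hLrow
  rw [hLhd] at this
  linarith [hmu.le, hmu.ge, this]

end
end KRS

/-- Every `k`-reduced nonnegative matrix `Y` has the form `y_{ij} = max (0, λ_i + μ_j)`,
and `y_{ij}` participates in a minimum `k`-assignment exactly when `y_{ij} = λ_i + μ_j`. -/
theorem k_reduced_structure (m n k : ℕ) (hk : 0 < k) (hkm : k ≤ m) (hmn : m ≤ n)
    (Y : ℕ → ℕ → ℝ) (hY : KReduced m n k Y) :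
    ∃ (lam : ℕ → ℝ) (mu : ℕ → ℝ),
      ∀ i < m, ∀ j < n,
        Y i j = max 0 (lam i + mu j) ∧
        (Participates m n k Y i j ↔ Y i j = lam i + mu j) := by
  classical
  obtain ⟨hnn, hred⟩ := hY
  refine ⟨fun i => if i < m then - KRS.dR m n k Y i else 0,
    fun j => if j < n then KRS.muF m n k Y j else 0, ?_⟩
  intro i hi j hj
  simp only [if_pos hi, if_pos hj]
  have key1 : - KRS.dR m n k Y i + KRS.muF m n k Y j ≤ KRS.Xp m n k Y i j := by
    have := KRS.mu_le_dR m n k Y hk hkm hmn hi hj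
    linarith
  have key2 : Participates m n k Y i j →
      Y i j = - KRS.dR m n k Y i + KRS.muF m n k Y j := by
    intro hp
    have h1 := KRS.dR_le_mu m n k Y hk hkm hmn hp
    have h2 : KRS.Xp m n k Y i j = Y i j := KRS.Xp_of_part m n k Y hp
    rw [h2] at key1
    linarith
  have key3 : ¬ Participates m n k Y i j →
      - KRS.dR m n k Y i + KRS.muF m n k Y j < Y i j := by
    intro hp
    have h2 : KRS.Xp m n k Y i j = Y i j - KRS.eps m n k Y := KRS.Xp_of_not_part m n k Y hp
    have h3 := KRS.eps_pos m n k Y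
    rw [h2] at key1
    linarith
  by_cases hp : Participates m n k Y i j
  · have he := key2 hp
    constructor
    · rw [← he]
      exact (max_eq_right (hnn i hi j hj)).symm
    · exact ⟨fun _ => he, fun _ => hp⟩
  · have hY0 : Y i j = 0 := by
      by_contra h
      exact hp (hred i hi j hj h)
    have hlt := key3 hp
    rw [hY0] at hlt
    constructor
    · rw [hY0]
      exact (max_eq_left (le_of_lt hlt)).symm
    · constructor
      · intro h; exact absurd h hp
      · intro h
        rw [hY0] at h
        exact absurd h.symm (ne_of_lt hlt)
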